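/- Let p be a prime, R a commutative ring, h ≥ 1, and 0 ≤ d ≤ h. Let φ = [a, v(b); c, e] be an invertible h × h matrix over W(R) in block form, where a is d × d, b is d × (h−d), c is (h−d) × d, and e is (h−d) × (h−d). Let B be an invertible h × h matrix over W(R), and let D be the h × h diagonal matrix over W(R) whose first d diagonal entries are 1 and whose last h−d diagonal entries are p. Set B' = [f(a), b; p·f(c), f(e)] · B · φ⁻¹. Then B' and the entrywise Frobenius f(φ) are invertible, and φ · (B⁻¹ · D) · f(φ)⁻¹ = (B')⁻¹ · D. -/

import Mathlib

open Matrix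

section Aux
variable {S : Type*} [CommRing S] {m n : ℕ}

private abbrev ιx (m n : ℕ) := Fin m ⊕ Fin n
private abbrev Tx (m n : ℕ) := MvPolynomial (Option (ιx m n × ιx m n)) ℤ

lemma det_fromBlocks_smul_swap (q : S)
    (A : Matrix (Fin m) (Fin m) S) (B : Matrix (Fin m) (Fin n) S)
    (C : Matrix (Fin n) (Fin m) S) (E : Matrix (Fin n) (Fin n) S) :
    (Matrix.fromBlocks A B (q • C) E).det = (Matrix.fromBlocks A (q • B) C E).det := by
  let P : Tx m n := MvPolynomial.X none
  let GA : Matrix (Fin m) (Fin m) (Tx m n) := Matrix.of fun i j => MvPolynomial.X (some (Sum.inl i, Sum.inl j))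
  let GB : Matrix (Fin m) (Fin n) (Tx m n) := Matrix.of fun i j => MvPolynomial.X (some (Sum.inl i, Sum.inr j))
  let GC : Matrix (Fin n) (Fin m) (Tx m n) := Matrix.of fun i j => MvPolynomial.X (some (Sum.inr i, Sum.inl j))
  let GE : Matrix (Fin n) (Fin n) (Tx m n) := Matrix.of fun i j => MvPolynomial.X (some (Sum.inr i, Sum.inr j))
  have key : (Matrix.fromBlocks GA GB (P • GC) GE) *
        (Matrix.fromBlocks (1 : Matrix (Fin m) (Fin m) (Tx m n)) 0 0 (P • (1 : Matrix (Fin n) (Fin n) (Tx m n)))) =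
      (Matrix.fromBlocks (1 : Matrix (Fin m) (Fin m) (Tx m n)) 0 0 (P • (1 : Matrix (Fin n) (Fin n) (Tx m n)))) *
        (Matrix.fromBlocks GA (P • GB) GC GE) := by
    simp [Matrix.fromBlocks_multiply, Matrix.mul_smul, Matrix.smul_mul]
  have hdiag : (Matrix.fromBlocks (1 : Matrix (Fin m) (Fin m) (Tx m n)) 0 0
      (P • (1 : Matrix (Fin n) (Fin n) (Tx m n)))).det = P ^ n := by
    rw [Matrix.det_fromBlocks_zero₂₁, Matrix.det_one, one_mul, Matrix.det_smul, Matrix.det_one,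
      mul_one, Fintype.card_fin]
  have hdet : (Matrix.fromBlocks GA GB (P • GC) GE).det = (Matrix.fromBlocks GA (P • GB) GC GE).det := by
    have h := congrArg Matrix.det key
    rw [Matrix.det_mul, Matrix.det_mul, hdiag] at h
    have hPn : P ^ n ≠ 0 := pow_ne_zero _ (MvPolynomial.X_ne_zero _)
    exact mul_right_cancel₀ hPn (by linear_combination h)
  let ev : Tx m n →+* S := (MvPolynomial.aeval
    (fun o : Option (ιx m n × ιx m n) => o.elim q (fun ij => Matrix.fromBlocks A B C E ij.1 ij.2))).toRingHom
  have h1 : ev.mapMatrix (Matrix.fromBlocks GA GB (P • GC) GE) = Matrix.fromBlocks A B (q • C) E := by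
    ext i j
    cases i <;> cases j <;>
      simp [ev, Matrix.fromBlocks, GA, GB, GC, GE, P]
  have h2 : ev.mapMatrix (Matrix.fromBlocks GA (P • GB) GC GE) = Matrix.fromBlocks A (q • B) C E := by
    ext i j
    cases i <;> cases j <;>
      simp [ev, Matrix.fromBlocks, GA, GB, GC, GE, P]
  calc (Matrix.fromBlocks A B (q • C) E).det
      = (ev.mapMatrix (Matrix.fromBlocks GA GB (P • GC) GE)).det := by rw [h1]
    _ = ev (Matrix.fromBlocks GA GB (P • GC) GE).det := (ev.map_det _).symm
    _ = ev (Matrix.fromBlocks GA (P • GB) GC GE).det := by rw [hdet]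
    _ = (ev.mapMatrix (Matrix.fromBlocks GA (P • GB) GC GE)).det := ev.map_det _
    _ = (Matrix.fromBlocks A (q • B) C E).det := by rw [h2]

end Aux



open Matrix WittVector in
/-- Change of coordinates for the semilinear operator of a display of height `h = d + e ≥ 1`
and dimension `d`: if `φ = [a, v(b); c, e]` and `B` are invertible over `W(R)`, `D` is the
diagonal matrix `diag(1, …, 1, p, …, p)` (with `d` ones and `e` entries `p`), and
`B' = [f(a), b; p·f(c), f(e)] · B · φ⁻¹`, then `B'` and `f(φ)` are invertible and
`φ · (B⁻¹ · D) · f(φ)⁻¹ = B'⁻¹ · D`. -/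
theorem display_operator_change_of_coordinates (p : ℕ) [Fact p.Prime]
    (R : Type) [CommRing R] (d e : ℕ) (hde : 1 ≤ d + e)
    (a : Matrix (Fin d) (Fin d) (WittVector p R))
    (b : Matrix (Fin d) (Fin e) (WittVector p R))
    (c : Matrix (Fin e) (Fin d) (WittVector p R))
    (eblk : Matrix (Fin e) (Fin e) (WittVector p R))
    (φ : Matrix (Fin d ⊕ Fin e) (Fin d ⊕ Fin e) (WittVector p R))
    (hφdef : φ = Matrix.fromBlocks a
      (b.map ⇑(WittVector.verschiebung (p := p) (R := R))) c eblk)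
    (hφ : IsUnit φ)
    (B : Matrix (Fin d ⊕ Fin e) (Fin d ⊕ Fin e) (WittVector p R)) (hB : IsUnit B)
    (D : Matrix (Fin d ⊕ Fin e) (Fin d ⊕ Fin e) (WittVector p R))
    (hD : D = Matrix.fromBlocks 1 0 0 ((p : WittVector p R) • 1))
    (B' : Matrix (Fin d ⊕ Fin e) (Fin d ⊕ Fin e) (WittVector p R))
    (hB'def : B' = Matrix.fromBlocks
      (a.map ⇑(WittVector.frobenius : WittVector p R →+* WittVector p R)) b
      ((p : WittVector p R) • c.map ⇑(WittVector.frobenius : WittVector p R →+* WittVector p R))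
      (eblk.map ⇑(WittVector.frobenius : WittVector p R →+* WittVector p R)) * B * φ⁻¹) :
    IsUnit B' ∧
    IsUnit (φ.map ⇑(WittVector.frobenius : WittVector p R →+* WittVector p R)) ∧
    φ * (B⁻¹ * D) *
      (φ.map ⇑(WittVector.frobenius : WittVector p R →+* WittVector p R))⁻¹ = B'⁻¹ * D := by
  set fr : WittVector p R →+* WittVector p R := WittVector.frobenius with hfr
  set M : Matrix (Fin d ⊕ Fin e) (Fin d ⊕ Fin e) (WittVector p R) :=
    Matrix.fromBlocks (a.map ⇑fr) b ((p : WittVector p R) • c.map ⇑fr) (eblk.map ⇑fr) with hM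
  set ψ : Matrix (Fin d ⊕ Fin e) (Fin d ⊕ Fin e) (WittVector p R) := φ.map ⇑fr with hψ
  -- f(v(b)) = p • b entrywise
  have hfvb : (b.map ⇑(WittVector.verschiebung (p := p) (R := R))).map ⇑fr = (p : WittVector p R) • b := by
    ext i j
    simp [Matrix.map_apply, hfr, WittVector.frobenius_verschiebung, mul_comm]
  have hψblocks : ψ = Matrix.fromBlocks (a.map ⇑fr) ((p : WittVector p R) • b) (c.map ⇑fr) (eblk.map ⇑fr) := by
    rw [hψ, hφdef]
    ext i j
    cases i <;> cases j <;> simp [Matrix.fromBlocks, Matrix.map_apply, hfr,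
      WittVector.frobenius_verschiebung, mul_comm]
  -- ψ = fr.mapMatrix φ is a unit
  have hψunit : IsUnit ψ := by
    have : ψ = fr.mapMatrix φ := rfl
    rw [this]
    exact hφ.map fr.mapMatrix.toMonoidHom
  -- det M = det ψ, so M is a unit
  have hMunit : IsUnit M := by
    rw [Matrix.isUnit_iff_isUnit_det, hM]
    have := det_fromBlocks_smul_swap ((p : WittVector p R)) (a.map ⇑fr) b (c.map ⇑fr) (eblk.map ⇑fr)
    rw [this, ← hψblocks]
    exact (Matrix.isUnit_iff_isUnit_det ψ).mp hψunit
  -- key block identity: M * D = D * ψ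
  have hMD : M * D = D * ψ := by
    rw [hM, hD, hψblocks, Matrix.fromBlocks_multiply, Matrix.fromBlocks_multiply]
    congr 1 <;> simp [Matrix.mul_smul, Matrix.smul_mul]
  have hφinvunit : IsUnit (φ⁻¹) := by
    rw [Matrix.isUnit_iff_isUnit_det] at hφ ⊢
    rwa [Matrix.det_nonsing_inv, isUnit_ringInverse]
  have hB'unit : IsUnit B' := by
    rw [hB'def]
    exact ((hMunit.mul hB).mul hφinvunit)
  refine ⟨hB'unit, hψunit, ?_⟩
  have hφdet := (Matrix.isUnit_iff_isUnit_det φ).mp hφ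
  have hBdet := (Matrix.isUnit_iff_isUnit_det B).mp hB
  have hMdet := (Matrix.isUnit_iff_isUnit_det M).mp hMunit
  have hψdet := (Matrix.isUnit_iff_isUnit_det ψ).mp hψunit
  have hB'inv : B'⁻¹ = φ * (B⁻¹ * M⁻¹) := by
    rw [hB'def, Matrix.mul_inv_rev, Matrix.mul_inv_rev,
      Matrix.nonsing_inv_nonsing_inv φ hφdet]
  have hDψ : D * ψ⁻¹ = M⁻¹ * D := by
    have h1 : M⁻¹ * (M * D) * ψ⁻¹ = M⁻¹ * (D * ψ) * ψ⁻¹ := by rw [hMD]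
    rwa [Matrix.nonsing_inv_mul_cancel_left M D hMdet, ← mul_assoc,
      Matrix.mul_nonsing_inv_cancel_right ψ (M⁻¹ * D) hψdet] at h1
  rw [hB'inv]
  rw [mul_assoc φ (B⁻¹ * D) ψ⁻¹, mul_assoc B⁻¹ D ψ⁻¹, hDψ, ← mul_assoc B⁻¹ M⁻¹ D, ← mul_assoc]
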